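/- Let X be a compact subset of ℂⁿ, let g ∈ P(X) satisfy P(g(X)) = C(g(X)), and suppose X is polynomially convex. Then P(X) = C(X) if and only if for each t ∈ ℂ the fiber X_t = g⁻¹(t) satisfies P(X_t) = C(X_t). -/

import Mathlib

open MvPolynomial

/-- The polynomially convex hull of a set `X ⊆ ℂⁿ`. -/
noncomputable def polyHull (n : ℕ) (X : Set (Fin n → ℂ)) : Set (Fin n → ℂ) :=
  {z | ∀ p : MvPolynomial (Fin n) ℂ, ‖eval z p‖ ≤ sSup ((fun x => ‖eval x p‖) '' X)}

/-- `X` is polynomially convex when it equals its polynomially convex hull. -/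
def IsPolyConvex (n : ℕ) (X : Set (Fin n → ℂ)) : Prop := polyHull n X = X

/-- `P(X)`: the uniform closure in `C(X)` of the holomorphic polynomials restricted to `X`. -/
noncomputable def polyAlg (n : ℕ) (X : Set (Fin n → ℂ)) : Set C(X, ℂ) :=
  closure {f : C(X, ℂ) | ∃ p : MvPolynomial (Fin n) ℂ, ∀ x : X, f x = eval (x : Fin n → ℂ) p}

/-- `P(Y)` for a compact subset `Y ⊆ ℂ`. -/
noncomputable def polyAlg1 (Y : Set ℂ) : Set C(Y, ℂ) :=
  closure {f : C(Y, ℂ) | ∃ p : Polynomial ℂ, ∀ y : Y, f y = p.eval (y : ℂ)}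

/-- Coordinate functions as continuous maps. -/
noncomputable def coordFn (n : ℕ) (X : Set (Fin n → ℂ)) (i : Fin n) : C(X, ℂ) :=
  ⟨fun x => (x : Fin n → ℂ) i, (continuous_apply i).comp continuous_subtype_val⟩

/-- Evaluation of multivariable polynomials as an algebra homomorphism into `C(X, ℂ)`. -/
noncomputable def polyHom (n : ℕ) (X : Set (Fin n → ℂ)) :
    MvPolynomial (Fin n) ℂ →ₐ[ℂ] C(X, ℂ) := aeval (coordFn n X)

lemma polyHom_apply (n : ℕ) (X : Set (Fin n → ℂ)) (p : MvPolynomial (Fin n) ℂ) (x : X) :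
    polyHom n X p x = eval (x : Fin n → ℂ) p := by
  induction p using MvPolynomial.induction_on with
  | C a => simp [polyHom]
  | add p q hp hq => simp [map_add, hp, hq]
  | mul_X p i hp =>
      have h1 : polyHom n X (p * MvPolynomial.X i) = polyHom n X p * coordFn n X i := by
        simp [polyHom, map_mul]
      rw [h1, ContinuousMap.mul_apply, hp]
      simp [coordFn]

lemma paeval_apply {X : Type*} [TopologicalSpace X] (g : C(X, ℂ)) (p : Polynomial ℂ) (x : X) :
    (Polynomial.aeval g p) x = p.eval (g x) := by
  induction p using Polynomial.induction_on' with
  | add p q hp hq => simp [map_add, hp, hq]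
  | monomial m a => simp [Polynomial.aeval_monomial, Polynomial.eval_monomial]

lemma polyAlg_eq_range (n : ℕ) (X : Set (Fin n → ℂ)) [CompactSpace X] :
    polyAlg n X = ((polyHom n X).range.topologicalClosure : Set C(X, ℂ)) := by
  have hset : {f : C(X, ℂ) | ∃ p : MvPolynomial (Fin n) ℂ, ∀ x : X, f x = eval (x : Fin n → ℂ) p}
      = ((polyHom n X).range : Set C(X, ℂ)) := by
    ext f
    constructor
    · rintro ⟨p, hp⟩
      exact ⟨p, (ContinuousMap.ext fun x => (polyHom_apply n X p x).trans (hp x).symm)⟩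
    · rintro ⟨p, rfl⟩
      exact ⟨p, fun x => polyHom_apply n X p x⟩
  rw [polyAlg, hset]
  rfl

theorem stmt1 (n : ℕ) (X : Set (Fin n → ℂ)) (hX : IsCompact X)
    (g : C(X, ℂ)) (hg : g ∈ polyAlg n X)
    (hgX : polyAlg1 (Set.range g) = Set.univ)
    (hpc : IsPolyConvex n X) :
    polyAlg n X = Set.univ ↔
      ∀ t : ℂ, polyAlg n (Subtype.val '' (g ⁻¹' {t})) = Set.univ := by
  haveI : CompactSpace X := isCompact_iff_compactSpace.mp hX
  constructor
  · -- forward direction: restriction + Tietze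
    intro hPX t
    set Y := Subtype.val '' (g ⁻¹' {t}) with hY
    have hYX : Y ⊆ X := by rintro _ ⟨x, -, rfl⟩; exact x.2
    have hYcpt : IsCompact Y :=
      ((isClosed_singleton.preimage g.continuous).isCompact).image continuous_subtype_val
    have hYcl : IsClosed Y := hYcpt.isClosed
    ext f
    simp only [Set.mem_univ, iff_true]
    obtain ⟨F, hF⟩ := f.exists_restrict_eq hYcl
    set G : C(X, ℂ) := F.comp ⟨Subtype.val, continuous_subtype_val⟩ with hG
    have hGmem : G ∈ polyAlg n X := by rw [hPX]; trivial
    set ι : C(Y, X) := ⟨fun y => ⟨y.1, hYX y.2⟩,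
      Continuous.subtype_mk continuous_subtype_val _⟩ with hι
    have hfG : f = G.comp ι := by
      ext y
      have h1 := DFunLike.congr_fun hF y
      exact h1.symm
    rw [hfG]
    unfold polyAlg at hGmem ⊢
    refine map_mem_closure (f := fun q : C(X, ℂ) => q.comp ι) (ContinuousMap.continuous_precomp ι) hGmem ?_
    rintro q ⟨p, hq⟩
    exact ⟨p, fun y => by exact hq (ι y)⟩
  · -- reverse direction: partition of unity along `g`
    intro hfib
    set A := (polyHom n X).range.topologicalClosure with hA
    have hAeq : polyAlg n X = (A : Set C(X, ℂ)) := polyAlg_eq_range n X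
    have hAcl : IsClosed (A : Set C(X, ℂ)) := (polyHom n X).range.isClosed_topologicalClosure
    set K := Set.range g with hK
    have hKcpt : IsCompact K := isCompact_range g.continuous
    set gf : C(X, K) := ⟨fun x => ⟨g x, x, rfl⟩, g.continuous.subtype_mk _⟩ with hgf
    have hgA : g ∈ (A : Set C(X, ℂ)) := by rw [← hAeq]; exact hg
    have comp_mem : ∀ h : C(K, ℂ), h.comp gf ∈ (A : Set C(X, ℂ)) := by
      intro h
      have hh : h ∈ polyAlg1 K := by rw [hgX]; trivial
      unfold polyAlg1 at hh
      have hmaps : Set.MapsTo (fun q : C(K, ℂ) => q.comp gf)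
          {q : C(K, ℂ) | ∃ p : Polynomial ℂ, ∀ y : K, q y = p.eval (y : ℂ)}
          (A : Set C(X, ℂ)) := by
        rintro q ⟨p, hq⟩
        have hqe : q.comp gf = Polynomial.aeval g p := by
          ext x
          rw [ContinuousMap.comp_apply, paeval_apply, hq]
          rfl
        show q.comp gf ∈ A
        rw [hqe]
        have h1 : Polynomial.aeval g p ∈ Algebra.adjoin ℂ {g} := by
          rw [Algebra.adjoin_singleton_eq_range_aeval]
          exact ⟨p, rfl⟩
        exact Algebra.adjoin_le (Set.singleton_subset_iff.2 hgA) h1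
      have h2 := map_mem_closure (ContinuousMap.continuous_precomp gf) hh hmaps
      rwa [hAcl.closure_eq] at h2
    have main : ∀ f : C(X, ℂ), f ∈ (A : Set C(X, ℂ)) := by
      intro f
      rw [← hAcl.closure_eq, Metric.mem_closure_iff]
      intro ε hε
      set ε' := ε / 3 with hε'
      have hε'pos : 0 < ε' := by positivity
      have tube : ∀ t : ℂ, ∃ p : MvPolynomial (Fin n) ℂ, ∃ δ > 0, ∀ x : X,
          dist (g x) t < δ → ‖f x - polyHom n X p x‖ < 2 * ε' := by
        intro t
        obtain ⟨p, hp⟩ : ∃ p : MvPolynomial (Fin n) ℂ, ∀ x : X, g x = t →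
            ‖f x - polyHom n X p x‖ < 2 * ε' := by
          set Y := Subtype.val '' (g ⁻¹' {t}) with hY
          have hYX : Y ⊆ X := by rintro _ ⟨x, -, rfl⟩; exact x.2
          have hYcpt : IsCompact Y :=
            ((isClosed_singleton.preimage g.continuous).isCompact).image continuous_subtype_val
          haveI : CompactSpace Y := isCompact_iff_compactSpace.mp hYcpt
          set ιY : C(Y, X) := ⟨fun y => ⟨y.1, hYX y.2⟩,
            Continuous.subtype_mk continuous_subtype_val _⟩ with hιY
          have hfY : f.comp ιY ∈ polyAlg n Y := by rw [hfib t]; trivial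
          unfold polyAlg at hfY
          rw [Metric.mem_closure_iff] at hfY
          obtain ⟨q, ⟨p, hqp⟩, hqd⟩ := hfY (2 * ε') (by positivity)
          refine ⟨p, fun x hxt => ?_⟩
          have hxY : (x : Fin n → ℂ) ∈ Y := ⟨x, by simp [hxt], rfl⟩
          have h1 : ιY ⟨(x : Fin n → ℂ), hxY⟩ = x := Subtype.ext rfl
          calc ‖f x - polyHom n X p x‖
              = dist ((f.comp ιY) ⟨(x : Fin n → ℂ), hxY⟩) (q ⟨(x : Fin n → ℂ), hxY⟩) := by
                rw [dist_eq_norm, ContinuousMap.comp_apply, h1, hqp ⟨(x : Fin n → ℂ), hxY⟩,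
                  polyHom_apply]
            _ ≤ dist (f.comp ιY) q := ContinuousMap.dist_apply_le_dist _
            _ < 2 * ε' := hqd
        set V := {x : X | ‖f x - polyHom n X p x‖ < 2 * ε'} with hV
        have hVo : IsOpen V := by
          have hc : Continuous fun x : X => ‖f x - polyHom n X p x‖ :=
            (f.continuous.sub (polyHom n X p).continuous).norm
          exact isOpen_lt hc continuous_const
        set Cs := g '' Vᶜ with hCs
        have hCc : IsCompact Cs := (hVo.isClosed_compl.isCompact).image g.continuous
        have htC : t ∉ Cs := by rintro ⟨x, hx, hgx⟩; exact hx (hp x hgx)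
        rcases Cs.eq_empty_or_nonempty with hCe | hCne
        · refine ⟨p, 1, one_pos, fun x _ => ?_⟩
          by_contra hxV
          exact absurd hCe (Set.nonempty_iff_ne_empty.mp ⟨g x, Set.mem_image_of_mem g hxV⟩)
        · have hδ : 0 < Metric.infDist t Cs :=
            (hCc.isClosed.notMem_iff_infDist_pos hCne).mp htC
          refine ⟨p, Metric.infDist t Cs, hδ, fun x hx => ?_⟩
          by_contra hxV
          have h3 : Metric.infDist t Cs ≤ dist t (g x) :=
            Metric.infDist_le_dist_of_mem (Set.mem_image_of_mem g hxV)
          rw [dist_comm] at h3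
          exact absurd hx (not_lt.mpr h3)
      choose P δ hδpos htube using tube
      have hcover : K ⊆ ⋃ t : ℂ, Metric.ball t (δ t) :=
        fun z _ => Set.mem_iUnion.2 ⟨z, Metric.mem_ball_self (hδpos z)⟩
      obtain ⟨s, hs⟩ := hKcpt.elim_finite_subcover (fun t => Metric.ball t (δ t))
        (fun t => Metric.isOpen_ball) hcover
      have hsK : K ⊆ ⋃ i : ↥s, Metric.ball (i : ℂ) (δ i) := by
        intro z hz
        obtain ⟨t, ht, hzt⟩ := Set.mem_iUnion₂.mp (hs hz)
        exact Set.mem_iUnion.2 ⟨⟨t, ht⟩, hzt⟩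
      obtain ⟨ρ, hρ⟩ := PartitionOfUnity.exists_isSubordinate hKcpt.isClosed
        (fun i : ↥s => Metric.ball (i : ℂ) (δ i)) (fun i => Metric.isOpen_ball) hsK
      have hχc : ∀ i : ↥s, Continuous fun y : K => (((ρ i) (y : ℂ) : ℝ) : ℂ) := fun i =>
        Complex.continuous_ofReal.comp ((ρ i).continuous.comp continuous_subtype_val)
      set χ : ↥s → C(K, ℂ) := fun i => ⟨_, hχc i⟩ with hχ
      set f' : C(X, ℂ) := ∑ i : ↥s, (χ i).comp gf * polyHom n X (P i) with hf'
      have hf'A : f' ∈ (A : Set C(X, ℂ)) := by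
        show f' ∈ A
        refine Subalgebra.sum_mem A fun i _ => Subalgebra.mul_mem A (comp_mem _) ?_
        exact (polyHom n X).range.le_topologicalClosure ⟨P i, rfl⟩
      refine ⟨f', hf'A, ?_⟩
      have hbound : ∀ x : X, dist (f x) (f' x) ≤ 2 * ε' := by
        intro x
        have hsum1 : ∑ i : ↥s, (ρ i) (g x) = 1 := by
          have h4 := ρ.sum_eq_one (⟨x, rfl⟩ : (g x) ∈ K)
          rwa [finsum_eq_sum_of_fintype] at h4
        have hcast : (∑ i : ↥s, (((ρ i) (g x) : ℝ) : ℂ)) = 1 := by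
          rw [← Complex.ofReal_sum, hsum1, Complex.ofReal_one]
        have hval : f' x = ∑ i : ↥s, (((ρ i) (g x) : ℝ) : ℂ) * polyHom n X (P i) x := by
          rw [hf', ContinuousMap.sum_apply]
          rfl
        have hfx : f x = ∑ i : ↥s, (((ρ i) (g x) : ℝ) : ℂ) * f x := by
          rw [← Finset.sum_mul, hcast, one_mul]
        have hterm : ∀ i : ↥s,
            (ρ i) (g x) * ‖f x - polyHom n X (P i) x‖ ≤ (ρ i) (g x) * (2 * ε') := by
          intro i
          rcases eq_or_ne ((ρ i) (g x)) 0 with h0 | h0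
          · simp [h0]
          · refine mul_le_mul_of_nonneg_left ?_ (ρ.nonneg i (g x))
            have hmem : g x ∈ Metric.ball (i : ℂ) (δ i) :=
              hρ i (subset_tsupport _ (Function.mem_support.mpr h0))
            exact le_of_lt (htube i x (Metric.mem_ball.mp hmem))
        calc dist (f x) (f' x) = ‖f x - f' x‖ := dist_eq_norm _ _
          _ = ‖∑ i : ↥s, (((ρ i) (g x) : ℝ) : ℂ) * (f x - polyHom n X (P i) x)‖ := by
              rw [hval]
              nth_rewrite 1 [hfx]
              rw [← Finset.sum_sub_distrib]
              simp only [mul_sub]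
          _ ≤ ∑ i : ↥s, ‖(((ρ i) (g x) : ℝ) : ℂ) * (f x - polyHom n X (P i) x)‖ :=
              norm_sum_le _ _
          _ = ∑ i : ↥s, (ρ i) (g x) * ‖f x - polyHom n X (P i) x‖ := by
              refine Finset.sum_congr rfl fun i _ => ?_
              rw [norm_mul, Complex.norm_real, Real.norm_of_nonneg (ρ.nonneg i (g x))]
          _ ≤ ∑ i : ↥s, (ρ i) (g x) * (2 * ε') := Finset.sum_le_sum fun i _ => hterm i
          _ = (∑ i : ↥s, (ρ i) (g x)) * (2 * ε') := (Finset.sum_mul _ _ _).symm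
          _ = 2 * ε' := by rw [hsum1, one_mul]
      have hdist : dist f f' ≤ 2 * ε' := (ContinuousMap.dist_le (by positivity)).mpr hbound
      exact lt_of_le_of_lt hdist (by rw [hε']; linarith)
    rw [hAeq]
    exact Set.eq_univ_of_forall main
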